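/- Let d be even and let u_1, ..., u_{d+1} be unit vectors in ℝ^d with ∑_{i=1}^{d+1} u_i = 0. Then there exist signs ε_1, ..., ε_{d+1} ∈ {±1} such that |ε_1 u_1 + ... + ε_{d+1} u_{d+1}| ≥ √(d+2). -/

import Mathlib

open Finset

theorem stmt_8 (d : ℕ) (hd : Even d) (u : Fin (d + 1) → EuclideanSpace ℝ (Fin d))
    (hu : ∀ i, ‖u i‖ = 1) (hsum : ∑ i, u i = 0) :
    ∃ ε : Fin (d + 1) → ℝ, (∀ i, ε i = 1 ∨ ε i = -1) ∧
      ‖∑ i, ε i • u i‖ ≥ Real.sqrt (d + 2) := by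
  classical
  obtain ⟨s, hs⟩ := Finite.exists_max (fun s : Fin (d+1) → Bool =>
    ‖∑ i, (if s i then (1:ℝ) else -1) • u i‖)
  set ε : Fin (d+1) → ℝ := fun i => if s i then 1 else -1 with hεdef
  have hε1 : ∀ i, ε i = 1 ∨ ε i = -1 := fun i => by
    by_cases h : s i <;> simp [hεdef, h]
  refine ⟨ε, hε1, ?_⟩
  set v := ∑ i, ε i • u i with hv
  have hεsq : ∀ i, ε i * ε i = 1 := fun i => by
    rcases hε1 i with h | h <;> rw [h] <;> ring
  -- key: flipping one sign doesn't increase the norm, hence ε i * ⟪v, u i⟫ ≥ 1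
  have key : ∀ i, 1 ≤ ε i * (inner ℝ v (u i) : ℝ) := by
    intro i
    have hflip := hs (Function.update s i (!s i))
    set v' := ∑ j, (if Function.update s i (!s i) j then (1:ℝ) else -1) • u j with hv'
    have hdiff : v - v' = (2 * ε i) • u i := by
      rw [hv, hv', ← Finset.sum_sub_distrib]
      rw [Finset.sum_eq_single i]
      · rw [Function.update_self, ← sub_smul]
        congr 1
        by_cases h : s i <;> simp [hεdef, h] <;> norm_num
      · intro j _ hj
        rw [Function.update_of_ne hj, ← sub_smul]
        simp [hεdef]
      · simp
    have hv'eq : v' = v - (2 * ε i) • u i := by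
      rw [← hdiff]; abel
    have hnle : ‖v - (2 * ε i) • u i‖ ≤ ‖v‖ := by rw [← hv'eq]; exact hflip
    have hsq : ‖v - (2 * ε i) • u i‖^2 ≤ ‖v‖^2 := by
      apply pow_le_pow_left₀ (norm_nonneg _) hnle
    rw [norm_sub_sq_real] at hsq
    rw [real_inner_smul_right, norm_smul] at hsq
    have hnu : ‖u i‖ = 1 := hu i
    have habs : ‖2 * ε i‖ = 2 := by
      rcases hε1 i with h | h <;> rw [h] <;> norm_num
    rw [habs, hnu] at hsq
    nlinarith [hsq]
  -- set a i = ⟪v, u i⟫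
  set a : Fin (d+1) → ℝ := fun i => (inner ℝ v (u i) : ℝ) with ha
  have hsum0 : ∑ i, a i = 0 := by
    have h0 : (inner ℝ v (∑ i, u i) : ℝ) = 0 := by rw [hsum, inner_zero_right]
    rw [inner_sum] at h0
    exact h0
  have hnormsq : ‖v‖^2 = ∑ i, ε i * a i := by
    have : (inner ℝ v v : ℝ) = ∑ i, ε i * a i := by
      conv_lhs => rw [hv]
      rw [inner_sum]
      refine Finset.sum_congr rfl fun i _ => ?_
      rw [real_inner_smul_right]
    rw [← this, real_inner_self_eq_norm_sq]
  set P := Finset.univ.filter (fun i => s i = true) with hP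
  have hsplit : ∀ f : Fin (d+1) → ℝ, ∑ i, f i =
      ∑ i ∈ P, f i + ∑ i ∈ Finset.univ.filter (fun i => ¬ s i = true), f i :=
    fun f => (Finset.sum_filter_add_sum_filter_not _ _ _).symm
  set Q := Finset.univ.filter (fun i => ¬ s i = true) with hQ
  have hεP : ∀ i ∈ P, ε i = 1 := by
    intro i hi
    rw [hP, Finset.mem_filter] at hi
    simp [hεdef, hi.2]
  have hεQ : ∀ i ∈ Q, ε i = -1 := by
    intro i hi
    rw [hQ, Finset.mem_filter] at hi
    simp [hεdef, hi.2]
  have haP : ∀ i ∈ P, 1 ≤ a i := by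
    intro i hi
    have := key i
    rw [hεP i hi] at this; linarith
  have haQ : ∀ i ∈ Q, a i ≤ -1 := by
    intro i hi
    have := key i
    rw [hεQ i hi] at this; linarith
  have hST : ∑ i ∈ P, a i + ∑ i ∈ Q, a i = 0 := by
    rw [← hsplit a]; exact hsum0
  have hSsubT : ∑ i ∈ P, a i - ∑ i ∈ Q, a i = ‖v‖^2 := by
    have hPpart : ∑ i ∈ P, ε i * a i = ∑ i ∈ P, a i :=
      Finset.sum_congr rfl (fun i hi => by rw [hεP i hi, one_mul])
    have hQpart : ∑ i ∈ Q, ε i * a i = -∑ i ∈ Q, a i := by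
      rw [← Finset.sum_neg_distrib]
      exact Finset.sum_congr rfl (fun i hi => by rw [hεQ i hi]; ring)
    rw [hnormsq, hsplit (fun i => ε i * a i), hPpart, hQpart]
    ring
  have hScard : (P.card : ℝ) ≤ ∑ i ∈ P, a i := by
    calc (P.card : ℝ) = ∑ _i ∈ P, (1:ℝ) := by simp
    _ ≤ ∑ i ∈ P, a i := Finset.sum_le_sum haP
  have hTcard : (Q.card : ℝ) ≤ -∑ i ∈ Q, a i := by
    calc (Q.card : ℝ) = ∑ _i ∈ Q, (1:ℝ) := by simp
    _ ≤ ∑ i ∈ Q, -a i := Finset.sum_le_sum (fun i hi => by linarith [haQ i hi])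
    _ = -∑ i ∈ Q, a i := by rw [Finset.sum_neg_distrib]
  have hcards : P.card + Q.card = d + 1 := by
    rw [hP, hQ]
    rw [Finset.card_filter_add_card_filter_not]
    simp
  obtain ⟨k, hk⟩ := hd
  have hfinal : (d:ℝ) + 2 ≤ ‖v‖^2 := by
    by_cases hpk : P.card ≤ k
    · have : k + 1 ≤ Q.card := by omega
      have : (k:ℝ) + 1 ≤ (Q.card : ℝ) := by exact_mod_cast this
      have hdk : (d:ℝ) = 2 * k := by exact_mod_cast hk ▸ (by push_cast; ring : ((k + k : ℕ) : ℝ) = 2 * k)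
      linarith
    · have : k + 1 ≤ P.card := by omega
      have : (k:ℝ) + 1 ≤ (P.card : ℝ) := by exact_mod_cast this
      have hdk : (d:ℝ) = 2 * k := by exact_mod_cast hk ▸ (by push_cast; ring : ((k + k : ℕ) : ℝ) = 2 * k)
      linarith
  calc Real.sqrt (d + 2) ≤ Real.sqrt (‖v‖^2) := Real.sqrt_le_sqrt hfinal
  _ = ‖v‖ := Real.sqrt_sq (norm_nonneg _)
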